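/- Let G be a group with subgroup K_{c_1} and subgroups K̃_1, ..., K̃_r each containing K_{c_1}. Let 1 ≤ s_1 < ... < s_r ≤ l be indices, and define K_{1,i} = K̃_j if i = s_j and K_{1,i} = K_{c_1} otherwise. Consider W_{c_1} = G × K̃_1 × ... × K̃_r and W'_{c_1} = G × K_{1,1} × ... × K_{1,l} with the standard right actions of K_{c_1}^{r+1} and K_{c_1}^{l+1} respectively (as in the construction of Ziller cycles). Then the map ζ̃ : W'_{c_1} → W_{c_1}, (g_0, h_1, ..., h_l) ↦ (g_0, h_1 h_2 ⋯ h_{s_1}, h_{s_1+1} ⋯ h_{s_2}, ..., h_{s_{r-1}+1} ⋯ h_{s_r}) is well-defined (each grouped product lies in the corresponding K̃_j) and induces a bijection ζ : W'_{c_1}/K_{c_1}^{l+1} → W_{c_1}/K_{c_1}^{r+1}, with inverse induced by ξ̃(g_0, k̃_1, ..., k̃_r) = (g_0, h_1, ..., h_l) where h_i = k̃_j if i = s_j and h_i = e otherwise. -/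

import Mathlib

/-- The orbit relation of the right action of `Kc^{l+1}` on
`W = G × K₁ × ⋯ × K_l` used to define Ziller's cycles. -/
def gammaRel {G : Type*} [Group G] {l : ℕ} (Kc : Subgroup G)
    (Ks : Fin l → Subgroup G) (w w' : G × ∀ i, Ks i) : Prop :=
  ∃ h : Fin (l + 1) → Kc,
    w'.1 = w.1 * (h 0 : G) ∧
    ∀ i, (w'.2 i : G) = ((h i.castSucc : G))⁻¹ * (w.2 i : G) * (h i.succ : G)

/-- The quotient `Γ = W / Kc^{l+1}`. -/
def Gamma {G : Type*} [Group G] {l : ℕ} (Kc : Subgroup G)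
    (Ks : Fin l → Subgroup G) :=
  Quot (gammaRel Kc Ks)

/-- Grouped ordered product: for `j`, the ordered product of the `h i` over
the indices `i` with `s_{j-1} < i ≤ s_j` (i.e. `i ≤ s j` and `s j' < i` for
all `j' < j`). -/
def groupedProd {G : Type*} [Monoid G] {l r : ℕ} (s : Fin r → Fin l)
    (h : Fin l → G) (j : Fin r) : G :=
  (((List.finRange l).filter fun i =>
      decide ((∀ j', j' < j → s j' < i) ∧ i ≤ s j)).map h).prod


section lists
variable {G : Type*} [Group G]

lemma range_filter_interval (a b : ℕ) : ∀ l : ℕ,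
    (List.range l).filter (fun n => decide (a ≤ n ∧ n < b)) = List.range' a (min b l - a)
  | 0 => by simp
  | (l+1) => by
      rw [List.range_succ, List.filter_append, range_filter_interval a b l]
      by_cases hb : b ≤ l
      · have : min b (l+1) = min b l := by omega
        rw [this]
        have : ¬ (a ≤ l ∧ l < b) := by omega
        simp [this]
      · by_cases ha : a ≤ l
        · have h1 : (a ≤ l ∧ l < b) := by omega
          have h2 : min b l - a = l - a := by omega
          have h3 : min b (l+1) - a = (l - a) + 1 := by rw [Nat.min_def]; split <;> omega
          rw [h2, h3, List.range'_concat]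
          have h4 : a + 1 * (l - a) = l := by omega
          rw [h4]
          simp [h1]
        · have h1 : ¬(a ≤ l ∧ l < b) := by omega
          have h2 : min b l - a = 0 := by omega
          have h3 : min b (l+1) - a = 0 := by omega
          simp [h1, h2, h3]

lemma telescope (h w : ℕ → G) (a : ℕ) : ∀ n : ℕ,
    ((List.range' a n).map (fun i => (h i)⁻¹ * w i * h (i+1))).prod
      = (h a)⁻¹ * ((List.range' a n).map w).prod * h (a+n)
  | 0 => by simp
  | (n+1) => by
      rw [List.range'_concat, List.map_append, List.map_append, List.prod_append,
        List.prod_append, telescope h w a n]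
      simp only [Nat.one_mul, List.map_cons, List.map_nil, List.prod_cons, List.prod_nil]
      group

lemma prod_concat (w : ℕ → G) (a n : ℕ) :
    ((List.range' a (n+1)).map w).prod = ((List.range' a n).map w).prod * w (a + n) := by
  rw [List.range'_concat]
  simp

end lists

section cnt
variable {l r : ℕ} (s : Fin r → Fin l)

/-- number of `j` with `s j < n`. -/
def cnt (n : ℕ) : ℕ := (Finset.univ.filter fun j => (s j).val < n).card

lemma cnt_le (n : ℕ) : cnt s n ≤ r := by
  classical
  exact (Finset.card_filter_le _ _).trans (by simp)

lemma cnt_zero : cnt s 0 = 0 := by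
  simp [cnt]

variable {s} (hs : StrictMono s)
include hs

lemma lt_cnt_iff {n : ℕ} {j : Fin r} : j.val < cnt s n ↔ (s j).val < n := by
  classical
  constructor
  · intro hj
    by_contra hn
    push_neg at hn
    have hsub : (Finset.univ.filter fun j' => (s j').val < n) ⊆ Finset.Iio j := by
      intro j' hj'
      simp only [Finset.mem_filter] at hj'
      simp only [Finset.mem_Iio]
      rw [← hs.lt_iff_lt]
      exact lt_of_lt_of_le (Fin.lt_def.mpr (lt_of_lt_of_le hj'.2 hn) : s j' < s j) le_rfl
    have := Finset.card_le_card hsub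
    rw [Fin.card_Iio] at this
    unfold cnt at hj
    omega
  · intro hn
    have hsub : Finset.Iic j ⊆ (Finset.univ.filter fun j' => (s j').val < n) := by
      intro j' hj'
      simp only [Finset.mem_Iic] at hj'
      simp only [Finset.mem_filter, Finset.mem_univ, true_and]
      have : s j' ≤ s j := hs.monotone hj'
      omega
    have := Finset.card_le_card hsub
    rw [Fin.card_Iic] at this
    unfold cnt
    omega

/-- characterization of `cnt`. -/
lemma cnt_eq {n m : ℕ} (hm : m ≤ r)
    (h1 : ∀ j : Fin r, j.val < m → (s j).val < n)
    (h2 : ∀ j : Fin r, m ≤ j.val → ¬ (s j).val < n) : cnt s n = m := by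
  rcases lt_trichotomy (cnt s n) m with h | h | h
  · exfalso
    have hcr : cnt s n < r := lt_of_lt_of_le h hm
    have := h1 ⟨cnt s n, hcr⟩ h
    rw [← lt_cnt_iff hs] at this
    simp only [Fin.val_mk] at this
    omega
  · exact h
  · exfalso
    have hmr : m < r := lt_of_lt_of_le h (cnt_le s n)
    have := (lt_cnt_iff hs (n := n) (j := ⟨m, hmr⟩)).mp h
    exact h2 ⟨m, hmr⟩ le_rfl this

lemma cnt_s (j : Fin r) : cnt s ((s j).val) = j.val := by
  refine cnt_eq hs (le_of_lt j.isLt) (fun j' hj' => ?_) (fun j' hj' => ?_)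
  · exact hs (Fin.lt_def.mpr (by omega) : j' < j)
  · have : s j ≤ s j' := hs.monotone (Fin.le_def.mpr (by omega))
    omega

lemma cnt_s_succ (j : Fin r) : cnt s ((s j).val + 1) = j.val + 1 := by
  refine cnt_eq hs j.isLt (fun j' hj' => ?_) (fun j' hj' => ?_)
  · have : s j' ≤ s j := hs.monotone (Fin.le_def.mpr (by omega))
    omega
  · have : s j < s j' := hs (Fin.lt_def.mpr (by omega))
    omega

omit hs in
lemma cnt_succ_of_not {n : ℕ} (hn : ∀ j, (s j).val ≠ n) : cnt s (n + 1) = cnt s n := by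
  unfold cnt
  congr 1
  ext j
  simp only [Finset.mem_filter, Finset.mem_univ, true_and]
  have := hn j
  omega

end cnt

section stt
variable {l r : ℕ} (s : Fin r → Fin l)

/-- position after the `m`-th marked index. -/
def bnd (m : ℕ) : ℕ :=
  if h : 0 < m ∧ m ≤ r then (s ⟨m - 1, by omega⟩).val + 1 else 0

lemma bnd_lt (m : ℕ) : bnd s m < l + 1 := by
  unfold bnd
  split
  · next h =>
      have := (s (⟨m - 1, by omega⟩ : Fin r)).isLt
      omega
  · omega

lemma bnd_zero : bnd s 0 = 0 := by
  simp [bnd]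

lemma bnd_succ (j : Fin r) : bnd s (j.val + 1) = (s j).val + 1 := by
  unfold bnd
  rw [dif_pos ⟨Nat.succ_pos _, j.isLt⟩]
  congr

/-- start of the block ending at position `n`. -/
def stt (n : ℕ) : ℕ :=
  if h : 0 < cnt s n ∧ cnt s n ≤ r then (s ⟨cnt s n - 1, by omega⟩).val + 1 else 0

lemma stt_eq_bnd (n : ℕ) : stt s n = bnd s (cnt s n) := rfl

lemma stt_zero : stt s 0 = 0 := by
  simp [stt, cnt_zero]

variable {s} (hs : StrictMono s)
include hs

lemma stt_le (n : ℕ) : stt s n ≤ n := by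
  unfold stt
  split
  · next h =>
      have : (⟨cnt s n - 1, by omega⟩ : Fin r).val < cnt s n := by simp; omega
      rw [lt_cnt_iff hs] at this
      omega
  · omega

lemma stt_s_succ (j : Fin r) : stt s ((s j).val + 1) = (s j).val + 1 := by
  unfold stt
  rw [dif_pos]
  · congr 2
    · apply congrArg
      apply Fin.ext
      simp [cnt_s_succ hs]
  · constructor
    · rw [cnt_s_succ hs]; omega
    · rw [cnt_s_succ hs]; exact j.isLt

omit hs in
lemma stt_succ_of_not {n : ℕ} (hn : ∀ j, (s j).val ≠ n) : stt s (n + 1) = stt s n := by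
  simp only [stt, cnt_succ_of_not hn]

lemma no_s_mem {n m : ℕ} (h1 : stt s n ≤ m) (h2 : m < n) (j : Fin r) : (s j).val ≠ m := by
  intro he
  have hlt : j.val < cnt s n := by rw [lt_cnt_iff hs]; omega
  have hcr : cnt s n ≤ r := cnt_le s n
  have hmono : s j ≤ s ⟨cnt s n - 1, by omega⟩ := hs.monotone (by rw [Fin.le_def]; simp; omega)
  rw [stt, dif_pos ⟨by omega, hcr⟩] at h1
  rw [Fin.le_def] at hmono
  omega

lemma clause1_iff (j : Fin r) (i : Fin l) :
    (∀ j', j' < j → s j' < i) ↔ stt s ((s j).val) ≤ i.val := by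
  unfold stt
  by_cases hj : 0 < j.val
  · rw [dif_pos (by rw [cnt_s hs]; exact ⟨hj, j.isLt.le⟩)]
    have hidx : (⟨cnt s ((s j).val) - 1, by have := cnt_le s ((s j).val); omega⟩ : Fin r)
        = ⟨j.val - 1, by omega⟩ := by
      apply Fin.ext; simp [cnt_s hs]
    rw [hidx]
    constructor
    · intro hall
      have := hall ⟨j.val - 1, by omega⟩ (by rw [Fin.lt_def]; simp; omega)
      rw [Fin.lt_def] at this
      simpa using this
    · intro hle j' hj'
      have : s j' ≤ s ⟨j.val - 1, by omega⟩ := hs.monotone (by rw [Fin.le_def]; simp; rw [Fin.lt_def] at hj'; omega)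
      rw [Fin.le_def] at this
      rw [Fin.lt_def]
      simp at this ⊢
      omega
  · rw [dif_neg (by rw [cnt_s hs]; omega)]
    constructor
    · intro _; omega
    · intro _ j' hj'
      rw [Fin.lt_def] at hj'
      omega

end stt

section gp
variable {G : Type*} [Group G] {l r : ℕ} {s : Fin r → Fin l}

/-- lift a function on `Fin l` to `ℕ`. -/
def liftF (f : Fin l → G) : ℕ → G := fun n => if h : n < l then f ⟨n, h⟩ else 1

lemma liftF_val (f : Fin l → G) (i : Fin l) : liftF f i.val = f i := by
  simp [liftF]

lemma groupedProd_eq_interval (hs : StrictMono s) (f : Fin l → G) (j : Fin r) :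
    groupedProd s f j =
      ((List.range' (stt s ((s j).val)) ((s j).val + 1 - stt s ((s j).val))).map
        (liftF f)).prod := by
  unfold groupedProd
  set a := stt s ((s j).val) with ha
  have hfil : ((List.finRange l).filter fun i =>
      decide ((∀ j', j' < j → s j' < i) ∧ i ≤ s j))
      = (List.finRange l).filter
        ((fun n => decide (a ≤ n ∧ n < (s j).val + 1)) ∘ Fin.val) := by
    apply List.filter_congr
    intro i _
    simp only [Function.comp_apply, decide_eq_decide]
    rw [clause1_iff hs, Fin.le_def]
    omega
  rw [hfil]
  have hmapf : ∀ L : List (Fin l), L.map f = (L.map Fin.val).map (liftF f) := by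
    intro L
    rw [List.map_map]
    apply List.map_congr_left
    intro i _
    simp [liftF]
  rw [hmapf, ← List.filter_map, (show (List.finRange l).map Fin.val = List.range l from List.ext_getElem (by simp) (by simp)), range_filter_interval]
  have : min ((s j).val + 1) l = (s j).val + 1 := by have := (s j).isLt; omega
  rw [this]

lemma groupedProd_mem (Kc : Subgroup G) (Kt : Fin r → Subgroup G) (hKt : ∀ j, Kc ≤ Kt j)
    (hs : StrictMono s) (K1 : Fin l → Subgroup G)
    (hK1s : ∀ j, K1 (s j) = Kt j) (hK1o : ∀ i, (∀ j, s j ≠ i) → K1 i = Kc)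
    (h : ∀ i, K1 i) (j : Fin r) :
    groupedProd s (fun i => (h i : G)) j ∈ Kt j := by
  unfold groupedProd
  apply list_prod_mem
  intro x hx
  obtain ⟨i, hi, rfl⟩ := List.mem_map.mp hx
  obtain ⟨-, hcond⟩ := List.mem_filter.mp hi
  rw [decide_eq_true_eq] at hcond
  obtain ⟨hc1, hc2⟩ := hcond
  by_cases hex : ∃ j', s j' = i
  · obtain ⟨j', rfl⟩ := hex
    have h1 : ¬ j' < j := fun hlt => lt_irrefl _ (hc1 j' hlt)
    have h2 : j' ≤ j := hs.le_iff_le.mp hc2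
    have : j' = j := le_antisymm h2 (not_lt.mp h1)
    subst this
    rw [← hK1s j']
    exact (h (s j')).2
  · push_neg at hex
    have := hK1o i hex
    exact hKt j (this ▸ (h i).2)

end gp

/-- Lemma 7.1 of the paper: the map
`ζ̃(g₀, h₁, …, h_l) = (g₀, h₁⋯h_{s₁}, h_{s₁+1}⋯h_{s₂}, …, h_{s_{r-1}+1}⋯h_{s_r})`
is well defined (each grouped product lies in `K̃_j`) and induces a bijection
`W'_{c₁}/K_{c₁}^{l+1} → W_{c₁}/K_{c₁}^{r+1}`, with inverse induced by
`ξ̃(g₀, k̃₁, …, k̃_r) = (g₀, h₁, …, h_l)`, `h_i = k̃_j` if `i = s_j`, `h_i = e`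
otherwise. -/
theorem ziller_cycle_regrouping_bijection {G : Type*} [Group G] {l r : ℕ}
    (Kc : Subgroup G) (Kt : Fin r → Subgroup G) (hKt : ∀ j, Kc ≤ Kt j)
    (s : Fin r → Fin l) (hs : StrictMono s)
    (K1 : Fin l → Subgroup G)
    (hK1s : ∀ j, K1 (s j) = Kt j)
    (hK1o : ∀ i, (∀ j, s j ≠ i) → K1 i = Kc) :
    (∀ (h : ∀ i, K1 i) (j : Fin r),
      groupedProd s (fun i => (h i : G)) j ∈ Kt j) ∧
    ∃ (ζ : Gamma Kc K1 → Gamma Kc Kt) (ξ : Gamma Kc Kt → Gamma Kc K1),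
      Function.LeftInverse ξ ζ ∧ Function.RightInverse ξ ζ ∧
      (∀ w : G × ∀ i, K1 i, ∃ w2 : G × ∀ j, Kt j,
        w2.1 = w.1 ∧
        (∀ j, (w2.2 j : G) = groupedProd s (fun i => (w.2 i : G)) j) ∧
        ζ (Quot.mk _ w) = Quot.mk _ w2) ∧
      (∀ w : G × ∀ j, Kt j, ∃ w' : G × ∀ i, K1 i,
        w'.1 = w.1 ∧
        (∀ j, (w'.2 (s j) : G) = (w.2 j : G)) ∧
        (∀ i, (∀ j, s j ≠ i) → (w'.2 i : G) = 1) ∧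
        ξ (Quot.mk _ w) = Quot.mk _ w') := by
  have partA : ∀ (h : ∀ i, K1 i) (j : Fin r),
      groupedProd s (fun i => (h i : G)) j ∈ Kt j :=
    fun h j => groupedProd_mem Kc Kt hKt hs K1 hK1s hK1o h j
  refine ⟨partA, ?_⟩
  -- the maps on representatives
  let zt : (G × ∀ i, K1 i) → (G × ∀ j, Kt j) := fun w =>
    (w.1, fun j => ⟨groupedProd s (fun i => (w.2 i : G)) j, partA w.2 j⟩)
  let xt : (G × ∀ j, Kt j) → (G × ∀ i, K1 i) := fun w =>
    (w.1, fun i =>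
      if hi : ∃ j, s j = i then
        ⟨(w.2 hi.choose : G), by
          have hK : K1 i = Kt hi.choose := by
            conv_lhs => rw [← hi.choose_spec]
            exact hK1s _
          rw [hK]
          exact (w.2 hi.choose).2⟩
      else ⟨1, Subgroup.one_mem _⟩)
  have xt_s : ∀ (w : G × ∀ j, Kt j) (j : Fin r), ((xt w).2 (s j) : G) = (w.2 j : G) := by
    intro w j
    have hex : ∃ j', s j' = s j := ⟨j, rfl⟩
    show ((if hi : ∃ j', s j' = s j then _ else _ : K1 (s j)) : G) = _
    rw [dif_pos hex]
    have := hs.injective hex.choose_spec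
    exact congrArg (fun t => ((w.2 t : G))) this
  have xt_o : ∀ (w : G × ∀ j, Kt j) (i : Fin l), (∀ j, s j ≠ i) → ((xt w).2 i : G) = 1 := by
    intro w i hi
    show ((if h : ∃ j, s j = i then _ else _ : K1 i) : G) = 1
    rw [dif_neg (not_exists.mpr hi)]
  -- zeta-tilde sends related points to related points
  have zsound : ∀ w w', gammaRel Kc K1 w w' → gammaRel Kc Kt (zt w) (zt w') := by
    rintro w w' ⟨h, hg, hent⟩
    have hcongr : ∀ (m m' : ℕ) (p : m < l + 1) (q : m' < l + 1), m = m' →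
        (h ⟨m, p⟩ : G) = (h ⟨m', q⟩ : G) := by
      intro m m' p q e
      subst e
      rfl
    refine ⟨fun j => h ⟨bnd s j.val, bnd_lt s _⟩, ?_, ?_⟩
    · show w'.1 = w.1 * (h ⟨bnd s (0 : Fin (r + 1)).val, bnd_lt s _⟩ : G)
      rw [hg]
      congr 2
    · intro j
      show groupedProd s (fun i => (w'.2 i : G)) j =
        ((h ⟨bnd s (j.castSucc).val, bnd_lt s _⟩ : G))⁻¹ *
          groupedProd s (fun i => (w.2 i : G)) j * (h ⟨bnd s (j.succ).val, bnd_lt s _⟩ : G)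
      rw [groupedProd_eq_interval hs, groupedProd_eq_interval hs]
      set a := stt s ((s j).val) with ha
      have hal : a ≤ (s j).val := stt_le hs _
      set H : ℕ → G := fun n => if hn : n < l + 1 then (h ⟨n, hn⟩ : G) else 1 with hH
      have Hdef : ∀ (n : ℕ) (hn : n < l + 1), H n = (h ⟨n, hn⟩ : G) := fun n hn => by
        rw [hH]
        exact dif_pos hn
      have hmap : (List.range' a ((s j).val + 1 - a)).map (liftF fun i => (w'.2 i : G))
          = (List.range' a ((s j).val + 1 - a)).map
              (fun n => (H n)⁻¹ * (liftF (fun i => (w.2 i : G)) n) * H (n + 1)) := by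
        apply List.map_congr_left
        intro n hn
        rw [List.mem_range'_1] at hn
        have hnl : n < l := by have := (s j).isLt; omega
        rw [Hdef n (by omega), Hdef (n + 1) (by omega)]
        simp only [liftF, dif_pos hnl]
        exact hent ⟨n, hnl⟩
      rw [hmap, telescope]
      have hend : a + ((s j).val + 1 - a) = (s j).val + 1 := by omega
      rw [hend, Hdef a (by omega), Hdef ((s j).val + 1) (by have := (s j).isLt; omega)]
      rw [hcongr a (bnd s (j.castSucc).val) (by omega) (bnd_lt s _)
        (by rw [ha, stt_eq_bnd, cnt_s hs, Fin.coe_castSucc])]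
      rw [hcongr ((s j).val + 1) (bnd s (j.succ).val) (by have := (s j).isLt; omega) (bnd_lt s _)
        (by rw [Fin.val_succ, bnd_succ])]
  have xsound : ∀ w w2, gammaRel Kc Kt w w2 → gammaRel Kc K1 (xt w) (xt w2) := by
    rintro w w2 ⟨h', hg, hent⟩
    refine ⟨fun i => h' ⟨cnt s i.val, by have := cnt_le s i.val; omega⟩, ?_, ?_⟩
    · show w2.1 = w.1 * _
      rw [hg]
      congr 2
      apply congrArg
      apply Fin.ext
      simp [cnt_zero]
    · intro i
      by_cases hi : ∃ j, s j = i
      · obtain ⟨j, rfl⟩ := hi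
        rw [xt_s, xt_s]
        have e1 : ∀ p : cnt s ((s j).castSucc).val < r + 1,
            (⟨cnt s ((s j).castSucc).val, p⟩ : Fin (r+1)) = j.castSucc := fun p => by
          apply Fin.ext
          simp [cnt_s hs]
        have e2 : ∀ p : cnt s ((s j).succ).val < r + 1,
            (⟨cnt s ((s j).succ).val, p⟩ : Fin (r+1)) = j.succ := fun p => by
          apply Fin.ext
          simp [cnt_s_succ hs]
        beta_reduce
        rw [e1, e2]
        exact hent j
      · push_neg at hi
        rw [xt_o _ _ hi, xt_o _ _ hi]
        have hv : ∀ j, (s j).val ≠ i.val := by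
          intro j he
          exact hi j (Fin.ext he)
        have e3 : ∀ (p : cnt s (i.succ).val < r + 1) (q : cnt s (i.castSucc).val < r + 1),
            (⟨cnt s (i.succ).val, p⟩ : Fin (r+1)) = ⟨cnt s (i.castSucc).val, q⟩ := fun p q => by
          apply Fin.ext
          simp only [Fin.val_succ, Fin.coe_castSucc]
          exact cnt_succ_of_not hv
        beta_reduce
        rw [e3 (by have := cnt_le s (i.succ).val; omega) (by have := cnt_le s (i.castSucc).val; omega)]
        group
  -- left inverse relation
  have linv_rel : ∀ w, gammaRel Kc K1 w (xt (zt w)) := by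
    intro w
    set Wf : ℕ → G := liftF (fun i => (w.2 i : G)) with hWf
    set Pf : ℕ → G := fun n => ((List.range' (stt s n) (n - stt s n)).map Wf).prod with hPf
    have hWmem : ∀ n : ℕ, n ≤ l → ∀ m ∈ List.range' (stt s n) (n - stt s n), Wf m ∈ Kc := by
      intro n hnl m hm
      rw [List.mem_range'_1] at hm
      have hsl : stt s n ≤ n := stt_le hs n
      have hm2 : m < n := by omega
      have hml : m < l := by omega
      have hns : ∀ j, s j ≠ (⟨m, hml⟩ : Fin l) := by
        intro j he
        exact no_s_mem hs hm.1 hm2 j (by rw [he])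
      rw [hWf]
      simp only [liftF, dif_pos hml]
      rw [← hK1o _ hns]
      exact (w.2 ⟨m, hml⟩).2
    have hPmem : ∀ n : ℕ, n ≤ l → Pf n ∈ Kc := by
      intro n hnl
      apply list_prod_mem
      intro x hx
      obtain ⟨m, hm, rfl⟩ := List.mem_map.mp hx
      exact hWmem n hnl m hm
    refine ⟨fun i => ⟨(Pf i.val)⁻¹, Subgroup.inv_mem _ (hPmem i.val (by omega))⟩, ?_, ?_⟩
    · show w.1 = w.1 * (Pf (0 : Fin (l+1)).val)⁻¹
      have : Pf (0 : Fin (l+1)).val = 1 := by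
        simp only [hPf, Fin.val_zero, stt_zero]
        simp
      rw [this]
      simp
    · intro i
      show ((xt (zt w)).2 i : G) = ((Pf i.val)⁻¹)⁻¹ * (w.2 i : G) * (Pf (i.val + 1))⁻¹
      rw [inv_inv]
      have hsl : stt s i.val ≤ i.val := stt_le hs i.val
      by_cases hi : ∃ j, s j = i
      · obtain ⟨j, rfl⟩ := hi
        rw [xt_s]
        show groupedProd s (fun i => (w.2 i : G)) j = _
        rw [groupedProd_eq_interval hs]
        have h1 : Pf ((s j).val + 1) = 1 := by
          rw [hPf]
          simp only [stt_s_succ hs]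
          simp
        rw [h1, inv_one, mul_one, hPf]
        have h2 : (s j).val + 1 - stt s ((s j).val) = ((s j).val - stt s ((s j).val)) + 1 := by
          have := stt_le hs ((s j).val); omega
        rw [h2, prod_concat]
        congr 1
        have h3 : stt s ((s j).val) + ((s j).val - stt s ((s j).val)) = (s j).val := by
          have := stt_le hs ((s j).val); omega
        rw [h3, liftF_val]
      · push_neg at hi
        rw [xt_o _ _ hi]
        have hv : ∀ j, (s j).val ≠ i.val := fun j he => hi j (Fin.ext he)
        have h1 : Pf (i.val + 1) = Pf i.val * (w.2 i : G) := by
          rw [hPf]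
          simp only [stt_succ_of_not hv]
          have h2 : i.val + 1 - stt s i.val = (i.val - stt s i.val) + 1 := by omega
          rw [h2, prod_concat]
          congr 1
          have h3 : stt s i.val + (i.val - stt s i.val) = i.val := by omega
          rw [h3, hWf, liftF_val]
        rw [h1]
        group
  -- right inverse: equality on the nose
  have rinv_eq : ∀ w, zt (xt w) = w := by
    intro w
    have h2 : (zt (xt w)).2 = w.2 := by
      funext j
      apply Subtype.ext
      show groupedProd s (fun i => ((xt w).2 i : G)) j = (w.2 j : G)
      rw [groupedProd_eq_interval hs]
      set a := stt s ((s j).val) with ha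
      have hal : a ≤ (s j).val := stt_le hs _
      have h2' : (s j).val + 1 - a = ((s j).val - a) + 1 := by omega
      rw [h2', prod_concat]
      have h3 : a + ((s j).val - a) = (s j).val := by omega
      rw [h3, liftF_val, xt_s]
      have h4 : ((List.range' a ((s j).val - a)).map (liftF fun i => ((xt w).2 i : G))).prod = 1 := by
        apply List.prod_eq_one
        intro x hx
        obtain ⟨m, hm, rfl⟩ := List.mem_map.mp hx
        rw [List.mem_range'_1] at hm
        have hm2 : m < (s j).val := by omega
        have hml : m < l := by have := (s j).isLt; omega
        have hns : ∀ j', s j' ≠ (⟨m, hml⟩ : Fin l) := by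
          intro j' he
          exact no_s_mem hs hm.1 hm2 j' (by rw [he])
        simp only [liftF, dif_pos hml]
        exact xt_o _ _ hns
      rw [h4, one_mul]
    exact Prod.ext rfl h2
  refine ⟨Quot.lift (fun w => Quot.mk _ (zt w)) (fun a b hab => Quot.sound (zsound a b hab)),
    Quot.lift (fun w => Quot.mk _ (xt w)) (fun a b hab => Quot.sound (xsound a b hab)),
    ?_, ?_, ?_, ?_⟩
  · intro γ
    induction γ using Quot.ind with
    | _ w => exact (Quot.sound (linv_rel w)).symm
  · intro γ
    induction γ using Quot.ind with
    | _ w => exact congrArg (Quot.mk _) (rinv_eq w)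
  · intro w
    exact ⟨zt w, rfl, fun j => rfl, rfl⟩
  · intro w
    exact ⟨xt w, rfl, fun j => xt_s w j, fun i hi => xt_o w i hi, rfl⟩
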